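/- Let R > 0 and let u, v be points of the open unit disk in ℂ with d_D(0,u) ≤ R and d_D(0,v) ≤ R. Sample (t, θ) from (0, R] × [0, 2π) according to the probability density cosh(t)/(2π·sinh(R)). Then the probability that u and v lie on the same side of the geodesic with polar coordinates (t, θ) equals 1 − d_D(u,v)/(π·sinh(R)). -/

import Mathlib

open Real MeasureTheory
open scoped Classical

/-- The inverse hyperbolic cosine. -/
noncomputable def arcosh (x : ℝ) : ℝ := Real.log (x + Real.sqrt (x ^ 2 - 1))

/-- The hyperbolic distance between two points of the Poincaré disk. -/
noncomputable def poincareDist (u v : ℂ) : ℝ :=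
  _root_.arcosh (1 + 2 * ‖u - v‖ ^ 2 /
    ((1 - ‖u‖ ^ 2) * (1 - ‖v‖ ^ 2)))

/-- A point `x` of the disk lies on the inner side of the geodesic with polar
coordinates `(t, θ)`, i.e. the Euclidean circle with center `coth t · e^{iθ}` and
radius `1 / sinh t`. -/
def innerSide (x : ℂ) (t θ : ℝ) : Prop :=
  ‖x - (Real.cosh t / Real.sinh t) * Complex.exp (θ * Complex.I)‖ <
    1 / Real.sinh t

lemma cosh_arcosh {X : ℝ} (hX : 1 ≤ X) : Real.cosh (_root_.arcosh X) = X := by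
  have h0 : 0 ≤ X ^ 2 - 1 := by nlinarith
  have hs : Real.sqrt (X ^ 2 - 1) ^ 2 = X ^ 2 - 1 := Real.sq_sqrt h0
  have hz : 0 < X + Real.sqrt (X ^ 2 - 1) := by
    have := Real.sqrt_nonneg (X ^ 2 - 1); linarith
  have hinv : (X + Real.sqrt (X ^ 2 - 1))⁻¹ = X - Real.sqrt (X ^ 2 - 1) := by
    rw [inv_eq_iff_eq_inv, eq_comm, inv_eq_iff_eq_inv]
    · field_simp; nlinarith
  rw [_root_.arcosh, Real.cosh_eq, Real.exp_log hz, Real.exp_neg, Real.exp_log hz, hinv]; ring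

lemma sinh_arcosh {X : ℝ} (hX : 1 ≤ X) : Real.sinh (_root_.arcosh X) = Real.sqrt (X ^ 2 - 1) := by
  have h0 : 0 ≤ X ^ 2 - 1 := by nlinarith
  have hs : Real.sqrt (X ^ 2 - 1) ^ 2 = X ^ 2 - 1 := Real.sq_sqrt h0
  have hz : 0 < X + Real.sqrt (X ^ 2 - 1) := by
    have := Real.sqrt_nonneg (X ^ 2 - 1); linarith
  have hinv : (X + Real.sqrt (X ^ 2 - 1))⁻¹ = X - Real.sqrt (X ^ 2 - 1) := by
    rw [inv_eq_iff_eq_inv, eq_comm, inv_eq_iff_eq_inv]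
    · field_simp; nlinarith
  rw [_root_.arcosh, Real.sinh_eq, Real.exp_log hz, Real.exp_neg, Real.exp_log hz, hinv]; ring

lemma arcosh_cosh (y : ℝ) : _root_.arcosh (Real.cosh y) = |y| := by
  have h1 : Real.cosh y ^ 2 - 1 = Real.sinh y ^ 2 := by
    have := Real.cosh_sq y; linarith
  rw [_root_.arcosh, h1, Real.sqrt_sq_eq_abs]
  have h2 : Real.cosh y + |Real.sinh y| = Real.exp |y| := by
    rcases le_or_gt 0 y with h | h
    · rw [abs_of_nonneg h, abs_of_nonneg (by simpa using Real.sinh_le_sinh.2 h :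
        (0:ℝ) ≤ Real.sinh y), Real.cosh_eq, Real.sinh_eq]; ring
    · rw [abs_of_neg h, abs_of_neg (by simpa using Real.sinh_lt_sinh.2 h :
        Real.sinh y < 0), Real.cosh_eq, Real.sinh_eq, Real.exp_neg]; ring
  rw [h2, Real.log_exp]

lemma arcosh_pos {X : ℝ} (hX : 1 < X) : 0 < _root_.arcosh X := by
  rw [_root_.arcosh]
  have : (1:ℝ) < X + Real.sqrt (X ^ 2 - 1) := by
    have := Real.sqrt_nonneg (X ^ 2 - 1); linarith
  exact Real.log_pos this

/-- α: the real part of `x e^{-iθ}`. -/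
noncomputable def pA (x : ℂ) (θ : ℝ) : ℝ := x.re * Real.cos θ + x.im * Real.sin θ

/-- β: the imaginary part of `x e^{-iθ}`. -/
noncomputable def pB (x : ℂ) (θ : ℝ) : ℝ := x.im * Real.cos θ - x.re * Real.sin θ

/-- squared norm shortcut -/
noncomputable def rr (x : ℂ) : ℝ := x.re ^ 2 + x.im ^ 2

/-- The denominator. -/
noncomputable def pD (x : ℂ) (θ : ℝ) : ℝ := (1 - rr x) ^ 2 + 4 * pB x θ ^ 2

/-- The signed distance `sinh` profile function. -/
noncomputable def pp (x : ℂ) (θ : ℝ) : ℝ := 2 * pA x θ / Real.sqrt (pD x θ)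

/-- Antiderivative: signed distance to the diameter at angle θ. -/
noncomputable def PP (x : ℂ) (θ : ℝ) : ℝ :=
  Real.arsinh (-2 * pB x θ / (1 - rr x))

lemma pA_sq_add_pB_sq (x : ℂ) (θ : ℝ) : pA x θ ^ 2 + pB x θ ^ 2 = rr x := by
  have h := Real.sin_sq_add_cos_sq θ
  simp only [pA, pB, rr]; nlinarith [h]

lemma rr_eq (x : ℂ) : rr x = ‖x‖ ^ 2 := by
  rw [Complex.sq_norm, Complex.normSq_apply, rr]; ring

lemma rr_nonneg (x : ℂ) : 0 ≤ rr x := by rw [rr]; positivity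

lemma rr_lt_one {x : ℂ} (hx : ‖x‖ < 1) : rr x < 1 := by
  rw [rr_eq]; nlinarith [norm_nonneg x]

lemma pD_pos {x : ℂ} (hx : ‖x‖ < 1) (θ : ℝ) : 0 < pD x θ := by
  have h := rr_lt_one hx
  have h2 : (0:ℝ) < 1 - rr x := by linarith
  have : 0 < (1 - rr x) ^ 2 := by positivity
  rw [pD]; nlinarith [sq_nonneg (pB x θ)]

lemma pD_eq (x : ℂ) (θ : ℝ) : pD x θ = (1 + rr x) ^ 2 - 4 * pA x θ ^ 2 := by
  have h := pA_sq_add_pB_sq x θ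
  rw [pD]; nlinarith [h]

lemma pA_sq_le (x : ℂ) (θ : ℝ) : pA x θ ^ 2 ≤ rr x := by
  have h := pA_sq_add_pB_sq x θ
  nlinarith [sq_nonneg (pB x θ)]

lemma pA_add_pi (x : ℂ) (θ : ℝ) : pA x (θ + π) = - pA x θ := by
  simp [pA, Real.cos_add_pi, Real.sin_add_pi]; ring

lemma pB_add_pi (x : ℂ) (θ : ℝ) : pB x (θ + π) = - pB x θ := by
  simp [pB, Real.cos_add_pi, Real.sin_add_pi]; ring

lemma pD_add_pi (x : ℂ) (θ : ℝ) : pD x (θ + π) = pD x θ := by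
  rw [pD, pD, pB_add_pi]; ring

lemma pp_add_pi (x : ℂ) (θ : ℝ) : pp x (θ + π) = - pp x θ := by
  rw [pp, pp, pA_add_pi, pD_add_pi]; ring

lemma PP_add_pi (x : ℂ) (θ : ℝ) : PP x (θ + π) = - PP x θ := by
  rw [PP, PP, pB_add_pi]
  rw [show -2 * - pB x θ / (1 - rr x) = -(-2 * pB x θ / (1 - rr x)) by ring]
  exact Real.arsinh_neg _

lemma continuous_pA (x : ℂ) : Continuous (pA x) := by
  unfold pA; fun_prop

lemma continuous_pB (x : ℂ) : Continuous (pB x) := by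
  unfold pB; fun_prop

lemma continuous_pD (x : ℂ) : Continuous (pD x) := by
  unfold pD; have := continuous_pB x; fun_prop

lemma continuous_pp {x : ℂ} (hx : ‖x‖ < 1) : Continuous (pp x) := by
  unfold pp
  have h1 := continuous_pA x
  have h2 : Continuous fun θ => Real.sqrt (pD x θ) := (continuous_pD x).sqrt
  exact (continuous_const.mul h1).div h2 (fun θ => (Real.sqrt_pos.2 (pD_pos hx θ)).ne')

lemma sqrt_pD_eq {x : ℂ} (hx : ‖x‖ < 1) (θ : ℝ) :
    Real.sqrt (1 + (-2 * pB x θ / (1 - rr x)) ^ 2) = Real.sqrt (pD x θ) / (1 - rr x) := by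
  have h1 : rr x < 1 := rr_lt_one hx
  have h2 : (0:ℝ) < 1 - rr x := by linarith
  have : 1 + (-2 * pB x θ / (1 - rr x)) ^ 2 = (Real.sqrt (pD x θ) / (1 - rr x)) ^ 2 := by
    rw [div_pow, div_pow, Real.sq_sqrt (pD_pos hx θ).le, pD]
    field_simp; ring
  rw [this, Real.sqrt_sq (by positivity)]

lemma hasDerivAt_PP {x : ℂ} (hx : ‖x‖ < 1) (θ : ℝ) :
    HasDerivAt (PP x) (pp x θ) θ := by
  have h1 : rr x < 1 := rr_lt_one hx
  have h2 : (0:ℝ) < 1 - rr x := by linarith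
  have hm : HasDerivAt (fun θ => -2 * pB x θ / (1 - rr x)) (2 * pA x θ / (1 - rr x)) θ := by
    have hB : HasDerivAt (pB x) (- pA x θ) θ := by
      unfold pB pA
      have hc : HasDerivAt (fun θ : ℝ => x.im * Real.cos θ) (x.im * -Real.sin θ) θ :=
        (Real.hasDerivAt_cos θ).const_mul _
      have hs : HasDerivAt (fun θ : ℝ => x.re * Real.sin θ) (x.re * Real.cos θ) θ :=
        (Real.hasDerivAt_sin θ).const_mul _
      exact (hc.sub hs).congr_deriv (by ring)
    have := (hB.const_mul (-2 : ℝ)).div_const (1 - rr x)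
    simpa using this.congr_deriv (by ring)
  have := ((Real.hasDerivAt_arsinh _).comp θ hm)
  rw [sqrt_pD_eq hx θ] at this
  have hD := pD_pos hx θ
  have hsq : 0 < Real.sqrt (pD x θ) := Real.sqrt_pos.2 hD
  refine HasDerivAt.congr_deriv (f := PP x) this ?_
  rw [pp]
  field_simp

lemma innerSide_iff {x : ℂ} (hx : ‖x‖ < 1) {t : ℝ} (ht : 0 < t) (θ : ℝ) :
    innerSide x t θ ↔ Real.sinh t < pp x θ := by
  have hs : 0 < Real.sinh t := by rwa [← Real.sinh_zero, Real.sinh_lt_sinh]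
  have hc : 0 < Real.cosh t := Real.cosh_pos t
  have h1 : rr x < 1 := rr_lt_one hx
  have hch : Real.cosh t ^ 2 = 1 + Real.sinh t ^ 2 := Real.cosh_sq' t
  have htrig := Real.sin_sq_add_cos_sq θ
  have hz : x - ((Real.cosh t / Real.sinh t : ℝ) : ℂ) * Complex.exp (θ * Complex.I) =
      Complex.mk (x.re - Real.cosh t / Real.sinh t * Real.cos θ)
        (x.im - Real.cosh t / Real.sinh t * Real.sin θ) := by
    apply Complex.ext <;>
      simp only [Complex.sub_re, Complex.sub_im, Complex.re_ofReal_mul, Complex.im_ofReal_mul,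
        Complex.exp_ofReal_mul_I_re, Complex.exp_ofReal_mul_I_im]
  rw [innerSide, show ((Real.cosh t : ℂ)) / ((Real.sinh t : ℂ)) =
    ((Real.cosh t / Real.sinh t : ℝ) : ℂ) from (Complex.ofReal_div _ _).symm, hz]
  rw [Complex.norm_def, show Complex.normSq (Complex.mk (x.re - Real.cosh t / Real.sinh t * Real.cos θ)
        (x.im - Real.cosh t / Real.sinh t * Real.sin θ)) =
      (x.re - Real.cosh t / Real.sinh t * Real.cos θ)^2 +
      (x.im - Real.cosh t / Real.sinh t * Real.sin θ)^2 from by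
    rw [Complex.normSq_mk]; ring]
  rw [Real.sqrt_lt' (by positivity)]
  have expand : ((x.re - Real.cosh t / Real.sinh t * Real.cos θ)^2 +
      (x.im - Real.cosh t / Real.sinh t * Real.sin θ)^2) * Real.sinh t ^ 2 =
      rr x * Real.sinh t ^ 2 - 2 * Real.sinh t * Real.cosh t * pA x θ +
      Real.cosh t ^ 2 := by
    have hcs : Real.cosh t / Real.sinh t * Real.sinh t = Real.cosh t := div_mul_cancel₀ _ hs.ne'
    simp only [rr, pA]
    linear_combination (Real.cosh t / Real.sinh t * Real.sinh t) ^ 2 * htrig +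
      (-2 * Real.sinh t * (x.re * Real.cos θ + x.im * Real.sin θ) +
        Real.cosh t / Real.sinh t * Real.sinh t + Real.cosh t) * hcs
  have hone : (1 / Real.sinh t)^2 * Real.sinh t ^ 2 = 1 := by
    field_simp
  have hstep1 : ((x.re - Real.cosh t / Real.sinh t * Real.cos θ)^2 +
      (x.im - Real.cosh t / Real.sinh t * Real.sin θ)^2 < (1 / Real.sinh t)^2) ↔
      (1 + rr x) * Real.sinh t < 2 * Real.cosh t * pA x θ := by
    rw [← mul_lt_mul_iff_of_pos_right (by positivity : (0:ℝ) < Real.sinh t ^ 2), expand]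
    rw [show (1 / Real.sinh t)^2 * Real.sinh t ^ 2 = 1 from hone]
    rw [hch]
    constructor <;> intro h
    · have h2 : ((1 + rr x) * Real.sinh t) * Real.sinh t <
          (2 * Real.cosh t * pA x θ) * Real.sinh t := by linarith [h]
      exact lt_of_mul_lt_mul_right h2 hs.le
    · have h2 : ((1 + rr x) * Real.sinh t) * Real.sinh t <
          (2 * Real.cosh t * pA x θ) * Real.sinh t :=
        mul_lt_mul_of_pos_right h hs
      linarith [h2]
  rw [hstep1]
  have hDpos := pD_pos hx θ
  have hsqD : 0 < Real.sqrt (pD x θ) := Real.sqrt_pos.2 hDpos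
  have hsqDsq : Real.sqrt (pD x θ) ^ 2 = pD x θ := Real.sq_sqrt hDpos.le
  have hDe := pD_eq x θ
  rcases le_or_gt (pA x θ) 0 with hneg | hpos
  · constructor
    · intro h; exfalso; nlinarith [rr_nonneg x]
    · intro h; exfalso
      have hle : pp x θ ≤ 0 := by
        rw [pp]; exact div_nonpos_of_nonpos_of_nonneg (by linarith) hsqD.le
      nlinarith [hle, h]
  · rw [pp, lt_div_iff₀ hsqD]
    constructor
    · intro h
      have h2 : ((1 + rr x) * Real.sinh t)^2 < (2 * Real.cosh t * pA x θ)^2 := by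
        apply sq_lt_sq' _ h
        nlinarith [rr_nonneg x]
      have hch4 : 4 * Real.cosh t ^ 2 * pA x θ ^ 2 =
          4 * (1 + Real.sinh t ^ 2) * pA x θ ^ 2 := by rw [hch]
      have h3 : (Real.sinh t * Real.sqrt (pD x θ))^2 < (2 * pA x θ)^2 := by
        rw [mul_pow, hsqDsq, hDe]
        linarith [h2, hch4]
      exact (abs_lt_of_sq_lt_sq' h3 (by positivity)).2
    · intro h
      have h3 : (Real.sinh t * Real.sqrt (pD x θ))^2 < (2 * pA x θ)^2 := by
        apply sq_lt_sq' _ h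
        nlinarith [hs, hsqD]
      rw [mul_pow, hsqDsq, hDe] at h3
      have hch4 : 4 * Real.cosh t ^ 2 * pA x θ ^ 2 =
          4 * (1 + Real.sinh t ^ 2) * pA x θ ^ 2 := by rw [hch]
      have h2 : ((1 + rr x) * Real.sinh t)^2 < (2 * Real.cosh t * pA x θ)^2 := by
        linarith [h3, hch4]
      exact (abs_lt_of_sq_lt_sq' h2 (by positivity)).2

lemma sinh_poincareDist_zero {x : ℂ} (hx : ‖x‖ < 1) :
    Real.sinh (poincareDist 0 x) = 2 * ‖x‖ / (1 - ‖x‖ ^ 2) := by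
  have ha : (0:ℝ) ≤ ‖x‖ := norm_nonneg x
  have h1 : (0:ℝ) < 1 - ‖x‖ ^ 2 := by nlinarith
  have habs : ‖(0:ℂ) - x‖ = ‖x‖ := by
    rw [zero_sub, norm_neg]
  rw [poincareDist, habs]
  have hX : (1:ℝ) ≤ 1 + 2 * ‖x‖ ^ 2 / ((1 - ‖(0:ℂ)‖ ^ 2) * (1 - ‖x‖ ^ 2)) := by
    have : (0:ℝ) ≤ 2 * ‖x‖ ^ 2 / ((1 - ‖(0:ℂ)‖ ^ 2) * (1 - ‖x‖ ^ 2)) := by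
      apply div_nonneg (by positivity)
      simp only [norm_zero]
      nlinarith
    linarith
  rw [_root_.sinh_arcosh hX]
  rw [show (1 + 2 * ‖x‖ ^ 2 / ((1 - ‖(0:ℂ)‖ ^ 2) * (1 - ‖x‖ ^ 2))) ^ 2 - 1
      = (2 * ‖x‖ / (1 - ‖x‖ ^ 2)) ^ 2 from by
    simp only [norm_zero]
    field_simp
    ring]
  exact Real.sqrt_sq (by positivity)

lemma pp_le_sinh {x : ℂ} {R : ℝ} (hR : 0 < R) (hx : ‖x‖ < 1)
    (hx' : poincareDist 0 x ≤ R) (θ : ℝ) : pp x θ ≤ Real.sinh R := by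
  have ha : (0:ℝ) ≤ ‖x‖ := norm_nonneg x
  have h1 : (0:ℝ) < 1 - ‖x‖ ^ 2 := by nlinarith
  have hsR : 0 < Real.sinh R := by rwa [← Real.sinh_zero, Real.sinh_lt_sinh]
  have hbound : 2 * ‖x‖ / (1 - ‖x‖ ^ 2) ≤ Real.sinh R := by
    rw [← sinh_poincareDist_zero hx]
    exact Real.sinh_le_sinh.2 hx'
  rcases le_or_gt (pA x θ) 0 with hneg | hpos
  · have : pp x θ ≤ 0 := by
      rw [pp]
      exact div_nonpos_of_nonpos_of_nonneg (by linarith)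
        (Real.sqrt_nonneg _)
    linarith
  · have hDpos := pD_pos hx θ
    have hsqD : 0 < Real.sqrt (pD x θ) := Real.sqrt_pos.2 hDpos
    have hrr : rr x = ‖x‖ ^ 2 := rr_eq x
    have hα2 : pA x θ ^ 2 ≤ ‖x‖ ^ 2 := by rw [← hrr]; exact pA_sq_le x θ
    have hapos : 0 < ‖x‖ := by
      rcases ha.lt_or_eq with h | h
      · exact h
      · exfalso; nlinarith [hα2, hpos]
    have key : pp x θ ≤ 2 * ‖x‖ / (1 - ‖x‖ ^ 2) := by
      rw [pp, div_le_div_iff₀ hsqD h1]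
      have step : 2 * pA x θ * (1 - ‖x‖ ^ 2) ≤ 2 * ‖x‖ * Real.sqrt (pD x θ) := by
        have e1 : 2 * ‖x‖ * Real.sqrt (pD x θ) =
            Real.sqrt ((2 * ‖x‖)^2 * pD x θ) := by
          rw [Real.sqrt_mul (by positivity), Real.sqrt_sq (by positivity)]
        have e2 : 2 * pA x θ * (1 - ‖x‖ ^ 2) =
            Real.sqrt ((2 * pA x θ * (1 - ‖x‖ ^ 2))^2) := by
          rw [Real.sqrt_sq (by positivity)]
        rw [e1, e2]
        apply Real.sqrt_le_sqrt
        rw [pD, hrr]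
        nlinarith [mul_le_mul_of_nonneg_right hα2 (sq_nonneg (1 - ‖x‖ ^ 2)),
          mul_nonneg (sq_nonneg (‖x‖)) (sq_nonneg (pB x θ))]
      linarith [step]
    linarith

lemma dot_lemma (u v : ℂ) (θ : ℝ) :
    pA u θ * pA v θ + pB u θ * pB v θ = u.re * v.re + u.im * v.im := by
  have htrig := Real.sin_sq_add_cos_sq θ
  simp only [pA, pB]
  linear_combination (u.re * v.re + u.im * v.im) * htrig

lemma crit_cosh {u v : ℂ} (hu : ‖u‖ < 1) (hv : ‖v‖ < 1) {θ : ℝ}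
    (h : pp u θ = pp v θ) :
    Real.cosh (PP u θ - PP v θ) =
      1 + 2 * ‖u - v‖ ^ 2 /
        ((1 - ‖u‖ ^ 2) * (1 - ‖v‖ ^ 2)) := by
  have hru : rr u < 1 := rr_lt_one hu
  have hrv : rr v < 1 := rr_lt_one hv
  have hru0 := rr_nonneg u
  have hrv0 := rr_nonneg v
  have hDu := pD_pos hu θ
  have hDv := pD_pos hv θ
  have hsu : 0 < Real.sqrt (pD u θ) := Real.sqrt_pos.2 hDu
  have hsv : 0 < Real.sqrt (pD v θ) := Real.sqrt_pos.2 hDv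
  have hsu2 : Real.sqrt (pD u θ) ^ 2 = pD u θ := Real.sq_sqrt hDu.le
  have hsv2 : Real.sqrt (pD v θ) ^ 2 = pD v θ := Real.sq_sqrt hDv.le
  -- cross multiplication
  have hcross : pA u θ * Real.sqrt (pD v θ) = pA v θ * Real.sqrt (pD u θ) := by
    rw [pp, pp, div_eq_div_iff hsu.ne' hsv.ne'] at h
    linarith [h]
  have hsq : pA u θ ^ 2 * pD v θ = pA v θ ^ 2 * pD u θ := by
    have h2 : (pA u θ * Real.sqrt (pD v θ)) ^ 2 = (pA v θ * Real.sqrt (pD u θ)) ^ 2 := by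
      rw [hcross]
    rw [mul_pow, mul_pow, hsu2, hsv2] at h2
    exact h2
  -- the key linear relation
  have key : pA u θ * (1 + rr v) = pA v θ * (1 + rr u) := by
    have h3 : (pA u θ * (1 + rr v)) ^ 2 = (pA v θ * (1 + rr u)) ^ 2 := by
      have e1 := pD_eq u θ
      have e2 := pD_eq v θ
      rw [e1, e2] at hsq
      ring_nf
      ring_nf at hsq
      linarith [hsq]
    rcases sq_eq_sq_iff_eq_or_eq_neg.1 h3 with h4 | h4
    · exact h4
    · -- opposite signs force both to vanish
      have hu0 : pA u θ = 0 := by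
        rcases lt_trichotomy (pA u θ) 0 with hlt | heq | hgt
        · exfalso
          have hv0 : pA v θ < 0 := by nlinarith [hcross, hsu, hsv]
          nlinarith [h4, hru0, hrv0]
        · exact heq
        · exfalso
          have hv0 : 0 < pA v θ := by nlinarith [hcross, hsu, hsv]
          nlinarith [h4, hru0, hrv0]
      have hv0 : pA v θ = 0 := by
        rw [hu0] at hcross
        simp at hcross
        rcases hcross with h5 | h5
        · exact h5
        · exact absurd h5 hsu.ne'
      rw [hu0, hv0]; ring
  -- product of the square roots
  have hDuDv : pD u θ * pD v θ = ((1 + rr u) * (1 + rr v) - 4 * pA u θ * pA v θ) ^ 2 := by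
    rw [pD_eq, pD_eq]
    linear_combination (4 * pA v θ * (1 + rr u) - 4 * pA u θ * (1 + rr v)) * key
  have hprod_nonneg : 0 ≤ (1 + rr u) * (1 + rr v) - 4 * pA u θ * pA v θ := by
    nlinarith [sq_nonneg (1 - pA u θ * pA v θ), sq_nonneg (pA u θ - pA v θ),
      pA_sq_le u θ, pA_sq_le v θ, sq_nonneg (pA u θ * pA v θ),
      mul_le_mul_of_nonneg_left (pA_sq_le v θ) (le_trans (sq_nonneg (pA u θ)) (pA_sq_le u θ))]
  have husv : Real.sqrt (pD u θ) * Real.sqrt (pD v θ) =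
      (1 + rr u) * (1 + rr v) - 4 * pA u θ * pA v θ := by
    rw [← Real.sqrt_mul hDu.le, hDuDv, Real.sqrt_sq hprod_nonneg]
  -- now compute the cosh
  rw [Real.cosh_sub, PP, PP, Real.cosh_arsinh, Real.cosh_arsinh,
    Real.sinh_arsinh, Real.sinh_arsinh, sqrt_pD_eq hu θ, sqrt_pD_eq hv θ]
  have habs : ‖u - v‖ ^ 2 = (u.re - v.re) ^ 2 + (u.im - v.im) ^ 2 := by
    rw [← rr_eq]; simp [rr, Complex.sub_re, Complex.sub_im]
  rw [habs, ← rr_eq, ← rr_eq]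
  have h1u : (0:ℝ) < 1 - rr u := by linarith
  have h1v : (0:ℝ) < 1 - rr v := by linarith
  have hdot := dot_lemma u v θ
  have hnu := pA_sq_add_pB_sq u θ
  have hnv := pA_sq_add_pB_sq v θ
  have expand : Real.sqrt (pD u θ) / (1 - rr u) * (Real.sqrt (pD v θ) / (1 - rr v)) =
      ((1 + rr u) * (1 + rr v) - 4 * pA u θ * pA v θ) / ((1 - rr u) * (1 - rr v)) := by
    rw [div_mul_div_comm, husv]
  rw [expand]
  have hrru : rr u = u.re ^ 2 + u.im ^ 2 := rfl
  have hrrv : rr v = v.re ^ 2 + v.im ^ 2 := rfl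
  have hnum : (1 + rr u) * (1 + rr v) - 4 * pA u θ * pA v θ - 4 * (pB u θ * pB v θ) =
      (1 - rr u) * (1 - rr v) + 2 * ((u.re - v.re) ^ 2 + (u.im - v.im) ^ 2) := by
    linear_combination (-4:ℝ) * hdot + 2 * hrru + 2 * hrrv
  rw [show (-2 * pB u θ / (1 - rr u) * (-2 * pB v θ / (1 - rr v))) =
      4 * (pB u θ * pB v θ) / ((1 - rr u) * (1 - rr v)) from by
    field_simp; ring]
  rw [div_sub_div_same, hnum, add_div, div_self (by positivity : ((1 - rr u) * (1 - rr v)) ≠ 0)]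

lemma PP_eq_unique {u v : ℂ} (hu : ‖u‖ < 1) (hv : ‖v‖ < 1)
    (huv : u ≠ v) {z1 z2 : ℝ} (h1 : PP u z1 = PP v z1) (h2 : PP u z2 = PP v z2)
    (hlt : z1 < z2) (hpi : z2 - z1 < π) : False := by
  have hru : rr u < 1 := rr_lt_one hu
  have hrv : rr v < 1 := rr_lt_one hv
  have hru0 := rr_nonneg u
  have hrv0 := rr_nonneg v
  have h1u : (0:ℝ) < 1 - rr u := by linarith
  have h1v : (0:ℝ) < 1 - rr v := by linarith
  -- convert PP equality to a linear trigonometric equation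
  have hlin : ∀ z : ℝ, PP u z = PP v z →
      (u.im * (1 - rr v) - v.im * (1 - rr u)) * Real.cos z -
      (u.re * (1 - rr v) - v.re * (1 - rr u)) * Real.sin z = 0 := by
    intro z hz
    rw [PP, PP, Real.arsinh_inj] at hz
    rw [div_eq_div_iff h1u.ne' h1v.ne'] at hz
    simp only [pB] at hz
    nlinarith [hz]
  set A' := u.re * (1 - rr v) - v.re * (1 - rr u) with hA'
  set B' := u.im * (1 - rr v) - v.im * (1 - rr u) with hB'
  have e1 := hlin z1 h1
  have e2 := hlin z2 h2
  have hAB : ¬ (A' = 0 ∧ B' = 0) := by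
    rintro ⟨hA0, hB0⟩
    apply huv
    have hre : u.re * (1 - rr v) = v.re * (1 - rr u) := by rw [hA'] at hA0; linarith
    have him : u.im * (1 - rr v) = v.im * (1 - rr u) := by rw [hB'] at hB0; linarith
    have hrru : rr u = u.re ^ 2 + u.im ^ 2 := rfl
    have hrrv : rr v = v.re ^ 2 + v.im ^ 2 := rfl
    have hsq : rr u * (1 - rr v) ^ 2 = rr v * (1 - rr u) ^ 2 := by
      linear_combination (u.re * (1 - rr v) + v.re * (1 - rr u)) * hre +
        (u.im * (1 - rr v) + v.im * (1 - rr u)) * him +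
        (1 - rr v) ^ 2 * hrru - (1 - rr u) ^ 2 * hrrv
    have hfac : (rr u - rr v) * (1 - rr u * rr v) = 0 := by linear_combination hsq
    have hlt1 : rr u * rr v < 1 := by nlinarith
    have heq : rr u = rr v := by
      rcases mul_eq_zero.1 hfac with h | h
      · linarith
      · exfalso; linarith
    have hk : (1 - rr u) = (1 - rr v) := by rw [heq]
    apply Complex.ext
    · have := hre; rw [heq] at this
      exact mul_right_cancel₀ h1v.ne' this
    · have := him; rw [heq] at this
      exact mul_right_cancel₀ h1v.ne' this
  -- determinant argument
  have hsin : Real.sin (z2 - z1) > 0 := by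
    apply Real.sin_pos_of_pos_of_lt_pi <;> linarith
  have hdetA : A' * Real.sin (z2 - z1) = 0 := by
    rw [Real.sin_sub]
    linear_combination (Real.cos z2) * e1 - (Real.cos z1) * e2
  have hdetB : B' * Real.sin (z2 - z1) = 0 := by
    rw [Real.sin_sub]
    linear_combination (Real.sin z2) * e1 - (Real.sin z1) * e2
  exact hAB ⟨by
    have := mul_eq_zero.1 hdetA
    rcases this with h | h
    · exact h
    · exact absurd h hsin.ne', by
    have := mul_eq_zero.1 hdetB
    rcases this with h | h
    · exact h
    · exact absurd h hsin.ne'⟩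

open Set in
lemma exists_gt_right {f : ℝ → ℝ} {f' x b : ℝ} (h : HasDerivAt f f' x) (h' : 0 < f')
    (hb : x < b) : ∃ y, x < y ∧ y < b ∧ f x < f y := by
  have ht : Filter.Tendsto (slope f x) (nhdsWithin x {x}ᶜ) (nhds f') :=
    hasDerivAt_iff_tendsto_slope.1 h
  have hev : ∀ᶠ y in nhdsWithin x {x}ᶜ, 0 < slope f x y :=
    ht.eventually (eventually_gt_nhds h')
  have hmono : nhdsWithin x (Ioi x) ≤ nhdsWithin x {x}ᶜ :=
    nhdsWithin_mono x (fun y hy => ne_of_gt hy)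
  have hev2 : ∀ᶠ y in nhdsWithin x (Ioi x), 0 < slope f x y := hmono hev
  have hIoo : Ioo x b ∈ nhdsWithin x (Ioi x) := Ioo_mem_nhdsGT_of_mem ⟨le_refl x, hb⟩
  have := hev2.and (Filter.eventually_of_mem hIoo (fun y hy => hy))
  obtain ⟨y, hy1, hy2⟩ := this.exists
  refine ⟨y, hy2.1, hy2.2, ?_⟩
  have hslope : slope f x y = (f y - f x) / (y - x) := slope_def_field f x y
  rw [hslope] at hy1
  have hyx : 0 < y - x := by linarith [hy2.1]
  rcases div_pos_iff.1 hy1 with ⟨h1, h2⟩ | ⟨h1, h2⟩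
  · linarith
  · linarith

open Set in
lemma exists_lt_left {f : ℝ → ℝ} {f' x a : ℝ} (h : HasDerivAt f f' x) (h' : 0 < f')
    (ha : a < x) : ∃ y, a < y ∧ y < x ∧ f y < f x := by
  have ht : Filter.Tendsto (slope f x) (nhdsWithin x {x}ᶜ) (nhds f') :=
    hasDerivAt_iff_tendsto_slope.1 h
  have hev : ∀ᶠ y in nhdsWithin x {x}ᶜ, 0 < slope f x y :=
    ht.eventually (eventually_gt_nhds h')
  have hmono : nhdsWithin x (Iio x) ≤ nhdsWithin x {x}ᶜ :=
    nhdsWithin_mono x (fun y hy => ne_of_lt hy)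
  have hev2 : ∀ᶠ y in nhdsWithin x (Iio x), 0 < slope f x y := hmono hev
  have hIoo : Ioo a x ∈ nhdsWithin x (Iio x) := Ioo_mem_nhdsLT_of_mem ⟨ha, le_refl x⟩
  have := hev2.and (Filter.eventually_of_mem hIoo (fun y hy => hy))
  obtain ⟨y, hy1, hy2⟩ := this.exists
  refine ⟨y, hy2.1, hy2.2, ?_⟩
  have hslope : slope f x y = (f y - f x) / (y - x) := slope_def_field f x y
  rw [hslope] at hy1
  have hyx : y - x < 0 := by linarith [hy2.2]
  rcases div_pos_iff.1 hy1 with ⟨h1, h2⟩ | ⟨h1, h2⟩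
  · linarith
  · linarith

open Set in
lemma key_integral_aux (Q q : ℝ → ℝ) (d A : ℝ) (hd : 0 < d)
    (hQ : ∀ θ, HasDerivAt Q (q θ) θ) (hq : Continuous q)
    (hanti : ∀ θ, Q (θ + π) = - Q θ)
    (hcrit : ∀ θ, q θ = 0 → |Q θ| = d)
    (huniq : ∀ z1 z2, Q z1 = 0 → Q z2 = 0 → z1 < z2 → z2 - z1 < π → False)
    (hA : q A = 0) (hQA : Q A = d) :
    ∫ θ in A..(A + π), |q θ| = 2 * d := by
  have hQc : Continuous Q := by
    have : Differentiable ℝ Q := fun θ => (hQ θ).differentiableAt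
    exact this.continuous
  have hApi : A < A + π := by linarith [Real.pi_pos]
  have hQApi : Q (A + π) = - d := by rw [hanti, hQA]
  -- |Q| ≤ d on the interval
  have habs : ∀ θ ∈ Icc A (A + π), |Q θ| ≤ d := by
    obtain ⟨c, hc, hmax⟩ := isCompact_Icc.exists_isMaxOn (Set.nonempty_Icc.2 hApi.le)
      hQc.continuousOn
    obtain ⟨m, hm, hmin⟩ := isCompact_Icc.exists_isMinOn (Set.nonempty_Icc.2 hApi.le)
      hQc.continuousOn
    have hQcd : Q c ≤ d := by
      rcases eq_or_ne c A with rfl | hcA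
      · rw [hQA]
      rcases eq_or_ne c (A + π) with rfl | hcA'
      · rw [hQApi]; linarith
      have hcIoo : c ∈ Ioo A (A + π) := ⟨hc.1.lt_of_ne (Ne.symm hcA), hc.2.lt_of_ne hcA'⟩
      have hloc : IsLocalMax Q c := hmax.isLocalMax (Icc_mem_nhds hcIoo.1 hcIoo.2)
      have hqc : q c = 0 := hloc.hasDerivAt_eq_zero (hQ c)
      have := hcrit c hqc
      calc Q c ≤ |Q c| := le_abs_self _
        _ = d := this
    have hQmd : -d ≤ Q m := by
      rcases eq_or_ne m A with rfl | hmA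
      · rw [hQA]; linarith
      rcases eq_or_ne m (A + π) with rfl | hmA'
      · rw [hQApi]
      have hmIoo : m ∈ Ioo A (A + π) := ⟨hm.1.lt_of_ne (Ne.symm hmA), hm.2.lt_of_ne hmA'⟩
      have hloc : IsLocalMin Q m := hmin.isLocalMin (Icc_mem_nhds hmIoo.1 hmIoo.2)
      have hqm : q m = 0 := hloc.hasDerivAt_eq_zero (hQ m)
      have := hcrit m hqm
      calc -d = -|Q m| := by rw [this]
        _ ≤ Q m := neg_abs_le _
    intro θ hθ
    rw [abs_le]
    exact ⟨le_trans hQmd (hmin hθ), le_trans (hmax hθ) hQcd⟩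
  -- q ≤ 0 on the interval
  have hsign : ∀ θ ∈ Icc A (A + π), q θ ≤ 0 := by
    by_contra hcon
    push_neg at hcon
    obtain ⟨σ, hσI, hσ⟩ := hcon
    have hσA : σ ≠ A := fun h => by rw [h, hA] at hσ; linarith
    have hσA' : σ ≠ A + π := by
      intro h
      have : q (A + π) = 0 := by
        have hder : HasDerivAt (fun θ => Q (θ + π)) (q (A + π)) A := by
          exact HasDerivAt.comp_add_const A π (hQ (A + π))
        have hder2 : HasDerivAt (fun θ => - Q θ) (- q A) A := (hQ A).neg
        have hfun : (fun θ => Q (θ + π)) = fun θ => - Q θ := funext hanti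
        rw [hfun] at hder
        have := hder.unique hder2
        rw [this, hA, neg_zero]
      rw [h, this] at hσ; linarith
    have hσIoo : σ ∈ Ioo A (A + π) := ⟨hσI.1.lt_of_ne (Ne.symm hσA), hσI.2.lt_of_ne hσA'⟩
    -- a point to the right with bigger value
    obtain ⟨σ', hσ'1, hσ'2, hσ'3⟩ := exists_gt_right (hQ σ) hσ hσIoo.2
    -- max on [σ, A + π]
    obtain ⟨c, hc, hmax⟩ := isCompact_Icc.exists_isMaxOn (Set.nonempty_Icc.2 hσIoo.2.le)
      hQc.continuousOn
    have hQcσ : Q σ < Q c := lt_of_lt_of_le hσ'3 (hmax ⟨hσ'1.le, hσ'2.le⟩)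
    have hQσ_ge : -d ≤ Q σ := by
      have := habs σ hσI; rw [abs_le] at this; exact this.1
    have hcA' : c ≠ A + π := by
      intro h; rw [h, hQApi] at hQcσ; linarith
    have hcσ : c ≠ σ := fun h => by rw [h] at hQcσ; linarith
    have hcIoo : c ∈ Ioo σ (A + π) := ⟨hc.1.lt_of_ne (Ne.symm hcσ), hc.2.lt_of_ne hcA'⟩
    have hqc : q c = 0 := by
      have hloc : IsLocalMax Q c := hmax.isLocalMax (Icc_mem_nhds hcIoo.1 hcIoo.2)
      exact hloc.hasDerivAt_eq_zero (hQ c)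
    have hQcd : Q c = d := by
      rcases abs_eq hd.le |>.1 (hcrit c hqc) with h | h
      · exact h
      · exfalso; rw [h] at hQcσ; linarith
    -- a point to the left with smaller value, min on [A, σ]
    obtain ⟨σ'', hσ''1, hσ''2, hσ''3⟩ := exists_lt_left (hQ σ) hσ hσIoo.1
    obtain ⟨m, hm, hmin⟩ := isCompact_Icc.exists_isMinOn (Set.nonempty_Icc.2 hσIoo.1.le)
      hQc.continuousOn
    have hQmσ : Q m < Q σ := lt_of_le_of_lt (hmin ⟨hσ''1.le, hσ''2.le⟩) hσ''3
    have hQσ_le : Q σ ≤ d := by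
      have := habs σ hσI; rw [abs_le] at this; exact this.2
    have hmA : m ≠ A := by
      intro h; rw [h, hQA] at hQmσ; linarith
    have hmσ : m ≠ σ := fun h => by rw [h] at hQmσ; linarith
    have hmIoo : m ∈ Ioo A σ := ⟨hm.1.lt_of_ne (Ne.symm hmA), hm.2.lt_of_ne hmσ⟩
    have hqm : q m = 0 := by
      have hloc : IsLocalMin Q m := hmin.isLocalMin (Icc_mem_nhds hmIoo.1 hmIoo.2)
      exact hloc.hasDerivAt_eq_zero (hQ m)
    have hQmd : Q m = - d := by
      rcases abs_eq hd.le |>.1 (hcrit m hqm) with h | h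
      · exfalso; rw [h] at hQmσ; linarith
      · exact h
    -- two zeros of Q at distance < π
    have hmc : m < c := hmIoo.2.trans hcIoo.1
    have hmz : A ≤ m := hmIoo.1.le
    obtain ⟨z1, hz1I, hz1⟩ := intermediate_value_Icc' hmIoo.1.le hQc.continuousOn
      (by rw [hQmd, hQA]; exact ⟨by linarith, by linarith⟩ : (0:ℝ) ∈ Icc (Q m) (Q A))
    obtain ⟨z2, hz2I, hz2⟩ := intermediate_value_Icc hmc.le hQc.continuousOn
      (by rw [hQmd, hQcd]; exact ⟨by linarith, by linarith⟩ : (0:ℝ) ∈ Icc (Q m) (Q c))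
    have hz1A : z1 ≠ A := fun h => by rw [h, hQA] at hz1; linarith
    have hz1m : z1 ≠ m := fun h => by rw [h, hQmd] at hz1; linarith
    have hz2m : z2 ≠ m := fun h => by rw [h, hQmd] at hz2; linarith
    have hz2c : z2 ≠ c := fun h => by rw [h, hQcd] at hz2; linarith
    have hlt12 : z1 < z2 := by
      have h1 : z1 < m := hz1I.2.lt_of_ne hz1m
      have h2 : m < z2 := hz2I.1.lt_of_ne (Ne.symm hz2m)
      linarith
    have hdist : z2 - z1 < π := by
      have h1 : A < z1 := hz1I.1.lt_of_ne (Ne.symm hz1A)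
      have h2 : z2 < A + π := lt_of_lt_of_le (hz2I.2.lt_of_ne hz2c) hcIoo.2.le
      linarith
    exact huniq z1 z2 hz1 hz2 hlt12 hdist
  -- conclude by FTC
  have hcongr : ∀ θ ∈ uIcc A (A + π), |q θ| = - q θ := by
    intro θ hθ
    rw [uIcc_of_le hApi.le] at hθ
    exact abs_of_nonpos (hsign θ hθ)
  rw [intervalIntegral.integral_congr hcongr]
  have hFTC : ∫ θ in A..(A + π), q θ = Q (A + π) - Q A :=
    intervalIntegral.integral_eq_sub_of_hasDerivAt (fun θ _ => hQ θ)
      (hq.intervalIntegrable _ _)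
  rw [intervalIntegral.integral_neg, hFTC, hQApi, hQA]
  ring

lemma key_integral (Q q : ℝ → ℝ) (d A : ℝ) (hd : 0 < d)
    (hQ : ∀ θ, HasDerivAt Q (q θ) θ) (hq : Continuous q)
    (hanti : ∀ θ, Q (θ + π) = - Q θ)
    (hcrit : ∀ θ, q θ = 0 → |Q θ| = d)
    (huniq : ∀ z1 z2, Q z1 = 0 → Q z2 = 0 → z1 < z2 → z2 - z1 < π → False)
    (hA : q A = 0) :
    ∫ θ in A..(A + π), |q θ| = 2 * d := by
  rcases (abs_eq hd.le).1 (hcrit A hA) with hQA | hQA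
  · exact key_integral_aux Q q d A hd hQ hq hanti hcrit huniq hA hQA
  · have := key_integral_aux (fun θ => - Q θ) (fun θ => - q θ) d A hd
      (fun θ => (hQ θ).neg) hq.neg
      (fun θ => by simp [hanti θ])
      (fun θ hθ => by rw [abs_neg]; exact hcrit θ (by simpa using hθ))
      (fun z1 z2 h1 h2 => huniq z1 z2 (by simpa using h1) (by simpa using h2))
      (by simp [hA]) (by simp [hQA])
    simpa using this

lemma exists_crit (q : ℝ → ℝ) (hq : Continuous q)
    (hanti : ∀ θ, q (θ + π) = - q θ) : ∃ A, q A = 0 := by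
  rcases lt_trichotomy (q 0) 0 with h | h | h
  · have hpi : 0 < q π := by have := hanti 0; simp at this; linarith
    obtain ⟨A, _, hA⟩ := intermediate_value_Icc Real.pi_pos.le hq.continuousOn
      (⟨h.le, hpi.le⟩ : (0:ℝ) ∈ Set.Icc (q 0) (q π))
    exact ⟨A, hA⟩
  · exact ⟨0, h⟩
  · have hpi : q π < 0 := by have := hanti 0; simp at this; linarith
    obtain ⟨A, _, hA⟩ := intermediate_value_Icc' Real.pi_pos.le hq.continuousOn
      (⟨hpi.le, h.le⟩ : (0:ℝ) ∈ Set.Icc (q π) (q 0))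
    exact ⟨A, hA⟩

/-- the central identity: the integral over a period of `|pp u - pp v|` is twice the distance. -/
lemma central_identity {u v : ℂ} (hu : ‖u‖ < 1) (hv : ‖v‖ < 1)
    (huv : u ≠ v) :
    ∫ θ in (0:ℝ)..π, |pp u θ - pp v θ| = 2 * poincareDist u v := by
  have hau : (0:ℝ) ≤ ‖u‖ := norm_nonneg u
  have hav : (0:ℝ) ≤ ‖v‖ := norm_nonneg v
  have h1u : (0:ℝ) < 1 - ‖u‖ ^ 2 := by nlinarith
  have h1v : (0:ℝ) < 1 - ‖v‖ ^ 2 := by nlinarith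
  have habsuv : 0 < ‖u - v‖ := by
    simp only [norm_pos_iff, sub_ne_zero]; exact huv
  have hX : 1 < 1 + 2 * ‖u - v‖ ^ 2 /
      ((1 - ‖u‖ ^ 2) * (1 - ‖v‖ ^ 2)) := by
    have : 0 < 2 * ‖u - v‖ ^ 2 /
        ((1 - ‖u‖ ^ 2) * (1 - ‖v‖ ^ 2)) := by positivity
    linarith
  have hd : 0 < poincareDist u v := _root_.arcosh_pos hX
  set Q : ℝ → ℝ := fun θ => PP u θ - PP v θ with hQdef
  set q : ℝ → ℝ := fun θ => pp u θ - pp v θ with hqdef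
  have hQ : ∀ θ, HasDerivAt Q (q θ) θ := fun θ =>
    (hasDerivAt_PP hu θ).sub (hasDerivAt_PP hv θ)
  have hq : Continuous q := (continuous_pp hu).sub (continuous_pp hv)
  have hanti : ∀ θ, Q (θ + π) = - Q θ := fun θ => by
    simp only [hQdef, PP_add_pi]; ring
  have hqanti : ∀ θ, q (θ + π) = - q θ := fun θ => by
    simp only [hqdef, pp_add_pi]; ring
  have hcrit : ∀ θ, q θ = 0 → |Q θ| = poincareDist u v := by
    intro θ hθ
    have hpp : pp u θ = pp v θ := by
      have : pp u θ - pp v θ = 0 := hθ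
      linarith
    have := crit_cosh hu hv hpp
    rw [poincareDist, ← this, _root_.arcosh_cosh]
  have huniq : ∀ z1 z2, Q z1 = 0 → Q z2 = 0 → z1 < z2 → z2 - z1 < π → False := by
    intro z1 z2 h1 h2 hlt hpi
    exact PP_eq_unique hu hv huv (by have : PP u z1 - PP v z1 = 0 := h1; linarith)
      (by have : PP u z2 - PP v z2 = 0 := h2; linarith) hlt hpi
  obtain ⟨A, hA⟩ := exists_crit q hq hqanti
  have hkey := key_integral Q q (poincareDist u v) A hd hQ hq hanti hcrit huniq hA
  -- shift the interval of integration by periodicity of |q|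
  have hper : Function.Periodic (fun θ => |q θ|) π := by
    intro θ; simp only []; rw [hqanti θ, abs_neg]
  have := hper.intervalIntegral_add_eq 0 A
  rw [zero_add] at this
  rw [this, hkey]

lemma ico_helper_le {t bu bv : ℝ} (h : bu ≤ bv) :
    (¬((t < bu) ↔ (t < bv))) ↔ (min bu bv ≤ t ∧ t < max bu bv) := by
  rw [min_eq_left h, max_eq_right h]
  constructor
  · intro hh
    rcases lt_or_ge t bu with h1 | h1
    · exact absurd (iff_of_true h1 (lt_of_lt_of_le h1 h)) hh
    rcases lt_or_ge t bv with h2 | h2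
    · exact ⟨h1, h2⟩
    · exact absurd (iff_of_false (not_lt.2 h1) (not_lt.2 h2)) hh
  · rintro ⟨h1, h2⟩ hh
    exact absurd (hh.2 h2) (not_lt.2 h1)

lemma ico_helper (t bu bv : ℝ) :
    (¬((t < bu) ↔ (t < bv))) ↔ (min bu bv ≤ t ∧ t < max bu bv) := by
  rcases le_total bu bv with h | h
  · exact ico_helper_le h
  · rw [show (¬((t < bu) ↔ (t < bv))) ↔ (¬((t < bv) ↔ (t < bu))) from by tauto,
      min_comm, max_comm]
    exact ico_helper_le h

lemma restrict_eq_aux {m M R : ℝ} (h0 : 0 ≤ m) (hMR : M ≤ R) :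
    (Set.Ico m M ∩ Set.Ioc 0 R : Set ℝ) =ᵐ[volume] (Set.Ioc m M : Set ℝ) := by
  rw [MeasureTheory.ae_eq_set]
  constructor
  · have hsub : (Set.Ico m M ∩ Set.Ioc 0 R) \ Set.Ioc m M ⊆ {m} := by
      rintro x ⟨⟨⟨hx1, hx2⟩, hx3, hx4⟩, hx5⟩
      simp only [Set.mem_Ioc, not_and, not_le] at hx5
      simp only [Set.mem_singleton_iff]
      by_contra hne
      have hmx : m < x := lt_of_le_of_ne hx1 (Ne.symm hne)
      have := hx5 hmx
      linarith
    exact measure_mono_null hsub (measure_singleton m)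
  · have hsub : Set.Ioc m M \ (Set.Ico m M ∩ Set.Ioc 0 R) ⊆ {M} := by
      rintro x ⟨⟨hx1, hx2⟩, hx3⟩
      simp only [Set.mem_singleton_iff]
      by_contra hne
      have hxM : x < M := lt_of_le_of_ne hx2 hne
      exact hx3 ⟨⟨hx1.le, hxM⟩, lt_of_le_of_lt h0 hx1, le_trans hx2 hMR⟩
    exact measure_mono_null hsub (measure_singleton M)

lemma inner_integral {u v : ℂ} {R : ℝ} (hR : 0 < R)
    (hu : ‖u‖ < 1) (hv : ‖v‖ < 1)
    (hu' : poincareDist 0 u ≤ R) (hv' : poincareDist 0 v ≤ R) (θ : ℝ) :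
    ∫ t in Set.Ioc (0:ℝ) R,
      (if ¬(innerSide u t θ ↔ innerSide v t θ) then Real.cosh t else 0) =
    |max 0 (pp u θ) - max 0 (pp v θ)| := by
  have hsR : 0 < Real.sinh R := by rwa [← Real.sinh_zero, Real.sinh_lt_sinh]
  set bu := Real.arsinh (max 0 (pp u θ)) with hbu
  set bv := Real.arsinh (max 0 (pp v θ)) with hbv
  have hb_facts : ∀ (x : ℂ), ‖x‖ < 1 → poincareDist 0 x ≤ R →
      (0 ≤ Real.arsinh (max 0 (pp x θ)) ∧ Real.arsinh (max 0 (pp x θ)) ≤ R ∧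
       ∀ t ∈ Set.Ioc (0:ℝ) R, (innerSide x t θ ↔ t < Real.arsinh (max 0 (pp x θ)))) := by
    intro x hx hx'
    refine ⟨Real.arsinh_nonneg_iff.2 (le_max_left _ _), ?_, ?_⟩
    · calc Real.arsinh (max 0 (pp x θ)) ≤ Real.arsinh (Real.sinh R) :=
        Real.arsinh_le_arsinh.2 (max_le hsR.le (pp_le_sinh hR hx hx' θ))
      _ = R := Real.arsinh_sinh R
    · intro t ht
      rw [innerSide_iff hx ht.1 θ]
      have hst : 0 < Real.sinh t := by rw [← Real.sinh_zero]; exact Real.sinh_lt_sinh.2 ht.1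
      rcases le_or_gt (pp x θ) 0 with hle | hlt
      · rw [max_eq_left hle, Real.arsinh_zero]
        constructor
        · intro h; linarith
        · intro h; linarith [ht.1]
      · rw [max_eq_right hlt.le]
        rw [show pp x θ = Real.sinh (Real.arsinh (pp x θ)) from (Real.sinh_arsinh _).symm]
        rw [Real.sinh_lt_sinh, Real.arsinh_sinh]
  obtain ⟨hbu0, hbuR, hbuiff⟩ := hb_facts u hu hu'
  obtain ⟨hbv0, hbvR, hbviff⟩ := hb_facts v hv hv'
  rw [← hbu] at hbu0 hbuR hbuiff
  rw [← hbv] at hbv0 hbvR hbviff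
  set m := min bu bv with hm
  set M := max bu bv with hM
  have hm0 : 0 ≤ m := le_min hbu0 hbv0
  have hmM : m ≤ M := min_le_max
  have hMR : M ≤ R := max_le hbuR hbvR
  have step1 : ∫ t in Set.Ioc (0:ℝ) R,
      (if ¬(innerSide u t θ ↔ innerSide v t θ) then Real.cosh t else 0) =
      ∫ t in Set.Ioc (0:ℝ) R, (Set.Ico m M).indicator Real.cosh t := by
    apply setIntegral_congr_fun measurableSet_Ioc
    intro t ht
    simp only [Set.indicator_apply]
    have hcond : (¬(innerSide u t θ ↔ innerSide v t θ)) ↔ (t ∈ Set.Ico m M) := by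
      rw [hbuiff t ht, hbviff t ht, Set.mem_Ico]
      exact ico_helper t bu bv
    rcases Classical.em (t ∈ Set.Ico m M) with h | h
    · rw [if_pos (hcond.2 h), if_pos h]
    · rw [if_neg (fun hc => h (hcond.1 hc)), if_neg h]
  rw [step1, MeasureTheory.integral_indicator measurableSet_Ico,
    MeasureTheory.Measure.restrict_restrict measurableSet_Ico,
    MeasureTheory.setIntegral_congr_set (restrict_eq_aux hm0 hMR),
    ← intervalIntegral.integral_of_le hmM]
  rw [intervalIntegral.integral_eq_sub_of_hasDerivAt
    (fun t _ => Real.hasDerivAt_sinh t) (Real.continuous_cosh.intervalIntegrable _ _)]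
  have hsinhM : Real.sinh M = max (max 0 (pp u θ)) (max 0 (pp v θ)) := by
    rw [hM, Real.sinh_strictMono.monotone.map_max, hbu, hbv,
      Real.sinh_arsinh, Real.sinh_arsinh]
  have hsinhm : Real.sinh m = min (max 0 (pp u θ)) (max 0 (pp v θ)) := by
    rw [hm, Real.sinh_strictMono.monotone.map_min, hbu, hbv,
      Real.sinh_arsinh, Real.sinh_arsinh]
  rw [hsinhM, hsinhm, max_sub_min_eq_abs, abs_sub_comm]

lemma fold_abs (a b : ℝ) : |max 0 a - max 0 b| + |max 0 (-a) - max 0 (-b)| = |a - b| := by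
  rcases le_total a 0 with ha | ha <;> rcases le_total b 0 with hb | hb
  · rw [max_eq_left ha, max_eq_left hb, max_eq_right (neg_nonneg.2 ha),
      max_eq_right (neg_nonneg.2 hb)]
    rw [show -a - -b = -(a - b) by ring, abs_neg, sub_self, abs_zero, zero_add]
  · rw [max_eq_left ha, max_eq_right hb, max_eq_right (neg_nonneg.2 ha),
      max_eq_left (neg_nonpos.2 hb)]
    rw [zero_sub, abs_neg, sub_zero, abs_of_nonneg hb, abs_of_nonneg (neg_nonneg.2 ha),
      abs_of_nonpos (by linarith : a - b ≤ 0)]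
    ring
  · rw [max_eq_right ha, max_eq_left hb, max_eq_left (neg_nonpos.2 ha),
      max_eq_right (neg_nonneg.2 hb)]
    rw [sub_zero, zero_sub, abs_neg, abs_of_nonneg ha, abs_of_nonneg (neg_nonneg.2 hb),
      abs_of_nonneg (by linarith : 0 ≤ a - b)]
    ring
  · rw [max_eq_right ha, max_eq_right hb, max_eq_left (neg_nonpos.2 ha),
      max_eq_left (neg_nonpos.2 hb)]
    simp

lemma measurableSet_innerSide (x : ℂ) :
    MeasurableSet {p : ℝ × ℝ | innerSide x p.1 p.2} := by
  have h1 : Measurable fun p : ℝ × ℝ =>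
      ‖x - ((Real.cosh p.1 / Real.sinh p.1 : ℝ) : ℂ) *
        Complex.exp ((p.2 : ℂ) * Complex.I)‖ := by
    apply continuous_norm.measurable.comp
    apply Measurable.const_sub
    apply Measurable.mul
    · exact RCLike.measurable_ofReal.comp
        (((Real.continuous_cosh.measurable).comp measurable_fst).div
          ((Real.continuous_sinh.measurable).comp measurable_fst))
    · exact ((Complex.continuous_exp.comp
        ((Complex.continuous_ofReal.comp continuous_snd).mul continuous_const))).measurable
  have h2 : Measurable fun p : ℝ × ℝ => 1 / Real.sinh p.1 :=
    measurable_const.div ((Real.continuous_sinh.measurable).comp measurable_fst)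
  have hset : {p : ℝ × ℝ | innerSide x p.1 p.2} =
      {p : ℝ × ℝ | ‖x - ((Real.cosh p.1 / Real.sinh p.1 : ℝ) : ℂ) *
        Complex.exp ((p.2 : ℂ) * Complex.I)‖ < 1 / Real.sinh p.1} := by
    ext p
    simp only [Set.mem_setOf_eq, innerSide, Complex.ofReal_div]
  rw [hset]
  exact measurableSet_lt h1 h2

lemma measurableSet_sep (u v : ℂ) :
    MeasurableSet {p : ℝ × ℝ | ¬(innerSide u p.1 p.2 ↔ innerSide v p.1 p.2)} := by
  have hA := measurableSet_innerSide u
  have hB := measurableSet_innerSide v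
  have heq : {p : ℝ × ℝ | ¬(innerSide u p.1 p.2 ↔ innerSide v p.1 p.2)} =
      ({p : ℝ × ℝ | innerSide u p.1 p.2} ∩ {p : ℝ × ℝ | innerSide v p.1 p.2}ᶜ) ∪
      ({p : ℝ × ℝ | innerSide u p.1 p.2}ᶜ ∩ {p : ℝ × ℝ | innerSide v p.1 p.2}) := by
    ext p
    simp only [Set.mem_union, Set.mem_inter_iff, Set.mem_compl_iff, Set.mem_setOf_eq]
    tauto
  rw [heq]
  exact (hA.inter hB.compl).union (hA.compl.inter hB)

lemma integrableOn_box {R M : ℝ} {f : ℝ × ℝ → ℝ} (hf : Measurable f)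
    (hbd : ∀ p ∈ (Set.Ioc (0:ℝ) R) ×ˢ (Set.Ico (0:ℝ) (2*π)), |f p| ≤ M) :
    IntegrableOn f ((Set.Ioc (0:ℝ) R) ×ˢ (Set.Ico (0:ℝ) (2*π))) := by
  apply MeasureTheory.Measure.integrableOn_of_bounded (M := M)
  · rw [MeasureTheory.Measure.volume_eq_prod, MeasureTheory.Measure.prod_prod]
    exact ENNReal.mul_ne_top (by simp [Real.volume_Ioc]) (by simp [Real.volume_Ico, ENNReal.mul_eq_top])
  · exact hf.aestronglyMeasurable
  · rw [MeasureTheory.ae_restrict_iff' (measurableSet_Ioc.prod measurableSet_Ico)]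
    exact Filter.Eventually.of_forall (fun p hp => by rw [Real.norm_eq_abs]; exact hbd p hp)

lemma outer_integral {u v : ℂ} (hu : ‖u‖ < 1) (hv : ‖v‖ < 1)
    (huv : u ≠ v) :
    ∫ θ in (0:ℝ)..(2*π), |max 0 (pp u θ) - max 0 (pp v θ)| = 2 * poincareDist u v := by
  set F : ℝ → ℝ := fun θ => |max 0 (pp u θ) - max 0 (pp v θ)| with hF
  have hFcont : Continuous F :=
    ((continuous_const.max (continuous_pp hu)).sub
      (continuous_const.max (continuous_pp hv))).abs
  have h1 : IntervalIntegrable F volume 0 π := hFcont.intervalIntegrable _ _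
  have h2 : IntervalIntegrable F volume π (2*π) := hFcont.intervalIntegrable _ _
  have hsplit : ∫ θ in (0:ℝ)..(2*π), F θ =
      (∫ θ in (0:ℝ)..π, F θ) + ∫ θ in π..(2*π), F θ :=
    (intervalIntegral.integral_add_adjacent_intervals h1 h2).symm
  have hshift : ∫ θ in π..(2*π), F θ = ∫ θ in (0:ℝ)..π, F (θ + π) := by
    rw [intervalIntegral.integral_comp_add_right F π, zero_add,
      show π + π = 2*π by ring]
  have hsum : (∫ θ in (0:ℝ)..π, F θ) + (∫ θ in (0:ℝ)..π, F (θ + π)) =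
      ∫ θ in (0:ℝ)..π, (F θ + F (θ + π)) :=
    (intervalIntegral.integral_add (hFcont.intervalIntegrable _ _)
      ((hFcont.comp (continuous_id.add continuous_const)).intervalIntegrable _ _)).symm
  have hpt : ∀ θ, F θ + F (θ + π) = |pp u θ - pp v θ| := by
    intro θ
    rw [hF]
    simp only [pp_add_pi]
    exact fold_abs (pp u θ) (pp v θ)
  rw [hsplit, hshift, hsum]
  rw [intervalIntegral.integral_congr (fun θ _ => hpt θ)]
  exact central_identity hu hv huv

lemma total_mass {R : ℝ} (hR : 0 < R) :
    ∫ p in (Set.Ioc (0:ℝ) R) ×ˢ (Set.Ico (0:ℝ) (2*π)), Real.cosh p.1 =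
      Real.sinh R * (2 * π) := by
  have hπ := Real.pi_pos
  have hint : IntegrableOn (fun p : ℝ × ℝ => Real.cosh p.1)
      ((Set.Ioc (0:ℝ) R) ×ˢ (Set.Ico (0:ℝ) (2*π))) := by
    apply integrableOn_box ((Real.continuous_cosh.measurable).comp measurable_fst)
    intro p hp
    show |Real.cosh p.1| ≤ Real.cosh R
    rw [abs_of_nonneg (Real.cosh_pos p.1).le]
    exact Real.cosh_le_cosh.2 (by
      rw [abs_of_pos hp.1.1, abs_of_pos hR]; exact hp.1.2)
  rw [MeasureTheory.Measure.volume_eq_prod] at hint ⊢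
  rw [MeasureTheory.setIntegral_prod _ hint]
  simp only [MeasureTheory.integral_const, MeasureTheory.Measure.restrict_apply
    MeasurableSet.univ, Set.univ_inter, Real.volume_Ico, smul_eq_mul]
  rw [show (volume.restrict (Set.Ico (0:ℝ) (2*π))).real Set.univ = 2*π by
    rw [Measure.real, Measure.restrict_apply MeasurableSet.univ, Set.univ_inter, Real.volume_Ico,
      ENNReal.toReal_ofReal (by linarith)]; ring]
  rw [MeasureTheory.integral_const_mul]
  rw [← intervalIntegral.integral_of_le hR.le,
    intervalIntegral.integral_eq_sub_of_hasDerivAt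
      (fun t _ => Real.hasDerivAt_sinh t) (Real.continuous_cosh.intervalIntegrable _ _),
    Real.sinh_zero]
  ring

lemma integrableOn_sep (u v : ℂ) {R : ℝ} (hR : 0 < R) :
    IntegrableOn (fun p : ℝ × ℝ =>
      if ¬(innerSide u p.1 p.2 ↔ innerSide v p.1 p.2) then Real.cosh p.1 else 0)
      ((Set.Ioc (0:ℝ) R) ×ˢ (Set.Ico (0:ℝ) (2*π))) := by
  have hgmeas : Measurable (fun p : ℝ × ℝ =>
      if ¬(innerSide u p.1 p.2 ↔ innerSide v p.1 p.2) then Real.cosh p.1 else 0) :=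
    Measurable.ite (measurableSet_sep u v)
      ((Real.continuous_cosh.measurable).comp measurable_fst) measurable_const
  apply integrableOn_box hgmeas (M := Real.cosh R)
  intro p hp
  show |if ¬(innerSide u p.1 p.2 ↔ innerSide v p.1 p.2) then Real.cosh p.1 else 0| ≤ Real.cosh R
  by_cases h : ¬(innerSide u p.1 p.2 ↔ innerSide v p.1 p.2)
  · rw [if_pos h, abs_of_nonneg (Real.cosh_pos p.1).le]
    exact Real.cosh_le_cosh.2 (by rw [abs_of_pos hp.1.1, abs_of_pos hR]; exact hp.1.2)
  · rw [if_neg h, abs_zero]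
    exact (Real.cosh_pos R).le

lemma sep_integral {u v : ℂ} {R : ℝ} (hR : 0 < R)
    (hu : ‖u‖ < 1) (hv : ‖v‖ < 1)
    (hu' : poincareDist 0 u ≤ R) (hv' : poincareDist 0 v ≤ R) (huv : u ≠ v) :
    ∫ p in (Set.Ioc (0:ℝ) R) ×ˢ (Set.Ico (0:ℝ) (2*π)),
      (if ¬(innerSide u p.1 p.2 ↔ innerSide v p.1 p.2) then Real.cosh p.1 else 0)
      = 2 * poincareDist u v := by
  have hπ := Real.pi_pos
  have hgint := integrableOn_sep u v hR
  rw [MeasureTheory.Measure.volume_eq_prod] at hgint ⊢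
  rw [MeasureTheory.setIntegral_prod _ hgint]
  have hswap : (∫ t in Set.Ioc (0:ℝ) R, ∫ θ in Set.Ico (0:ℝ) (2*π),
        (if ¬(innerSide u t θ ↔ innerSide v t θ) then Real.cosh t else 0)) =
      ∫ θ in Set.Ico (0:ℝ) (2*π), ∫ t in Set.Ioc (0:ℝ) R,
        (if ¬(innerSide u t θ ↔ innerSide v t θ) then Real.cosh t else 0) := by
    apply MeasureTheory.integral_integral_swap
    rw [MeasureTheory.Measure.prod_restrict]
    exact hgint
  rw [hswap]
  have hinner : ∀ θ ∈ Set.Ico (0:ℝ) (2*π), (∫ t in Set.Ioc (0:ℝ) R,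
      (if ¬(innerSide u t θ ↔ innerSide v t θ) then Real.cosh t else 0)) =
      |max 0 (pp u θ) - max 0 (pp v θ)| := fun θ _ => inner_integral hR hu hv hu' hv' θ
  rw [MeasureTheory.setIntegral_congr_fun measurableSet_Ico hinner]
  rw [MeasureTheory.integral_Ico_eq_integral_Ioo, ← MeasureTheory.integral_Ioc_eq_integral_Ioo,
    ← intervalIntegral.integral_of_le (by positivity : (0:ℝ) ≤ 2*π)]
  exact outer_integral hu hv huv

/-- Sampling a geodesic `(t, θ)` from `(0, R] × [0, 2π)` according to the
probability density `cosh t / (2π sinh R)`, the probability that `u` and `v` lie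
on the same side of the geodesic equals `1 - d_D(u, v) / (π sinh R)`. -/
theorem collision_probability_random_geodesic (R : ℝ) (hR : 0 < R) (u v : ℂ)
    (hu : ‖u‖ < 1) (hv : ‖v‖ < 1)
    (hu' : poincareDist 0 u ≤ R) (hv' : poincareDist 0 v ≤ R) :
    ∫ p in (Set.Ioc (0 : ℝ) R) ×ˢ (Set.Ico (0 : ℝ) (2 * π)),
        (if (innerSide u p.1 p.2 ↔ innerSide v p.1 p.2) then
          Real.cosh p.1 / (2 * π * Real.sinh R) else 0)
      = 1 - poincareDist u v / (π * Real.sinh R) := by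
  have hπ := Real.pi_pos
  have hsR : 0 < Real.sinh R := by rwa [← Real.sinh_zero, Real.sinh_lt_sinh]
  have hSmeas : MeasurableSet ((Set.Ioc (0:ℝ) R) ×ˢ (Set.Ico (0:ℝ) (2*π))) :=
    measurableSet_Ioc.prod measurableSet_Ico
  have htotal : ∫ p in (Set.Ioc (0:ℝ) R) ×ˢ (Set.Ico (0:ℝ) (2*π)),
      Real.cosh p.1 / (2 * π * Real.sinh R) = 1 := by
    rw [MeasureTheory.integral_div, total_mass hR]
    field_simp
  by_cases huv : u = v
  · subst huv
    have h0 : poincareDist u u = 0 := by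
      rw [poincareDist]
      simp only [sub_self, norm_zero]
      rw [show (0:ℝ)^2 = 0 by ring, mul_zero, zero_div, add_zero, _root_.arcosh]
      norm_num
    rw [h0]
    have hpt : ∀ p ∈ (Set.Ioc (0:ℝ) R) ×ˢ (Set.Ico (0:ℝ) (2*π)),
        (if (innerSide u p.1 p.2 ↔ innerSide u p.1 p.2) then
          Real.cosh p.1 / (2 * π * Real.sinh R) else 0) =
        Real.cosh p.1 / (2 * π * Real.sinh R) := fun p _ => if_pos Iff.rfl
    rw [MeasureTheory.setIntegral_congr_fun hSmeas hpt, htotal]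
    norm_num
  · have hsep := sep_integral hR hu hv hu' hv' huv
    have hdecomp : ∀ p ∈ (Set.Ioc (0:ℝ) R) ×ˢ (Set.Ico (0:ℝ) (2*π)),
        (if (innerSide u p.1 p.2 ↔ innerSide v p.1 p.2) then
          Real.cosh p.1 / (2 * π * Real.sinh R) else 0) =
        Real.cosh p.1 / (2 * π * Real.sinh R) -
        (2 * π * Real.sinh R)⁻¹ *
          (if ¬(innerSide u p.1 p.2 ↔ innerSide v p.1 p.2) then Real.cosh p.1 else 0) := by
      intro p _
      by_cases h : innerSide u p.1 p.2 ↔ innerSide v p.1 p.2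
      · rw [if_pos h, if_neg (not_not_intro h), mul_zero, sub_zero]
      · rw [if_neg h, if_pos h]
        field_simp
        ring
    rw [MeasureTheory.setIntegral_congr_fun hSmeas hdecomp]
    have hint1 : IntegrableOn (fun p : ℝ × ℝ => Real.cosh p.1 / (2 * π * Real.sinh R))
        ((Set.Ioc (0:ℝ) R) ×ˢ (Set.Ico (0:ℝ) (2*π))) := by
      apply integrableOn_box (M := Real.cosh R / (2 * π * Real.sinh R))
      · exact ((Real.continuous_cosh.comp continuous_fst).div_const _).measurable
      · intro p hp
        have hc : (0:ℝ) < 2 * π * Real.sinh R := by positivity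
        show |Real.cosh p.1 / (2 * π * Real.sinh R)| ≤ Real.cosh R / (2 * π * Real.sinh R)
        rw [abs_div, abs_of_nonneg (Real.cosh_pos p.1).le, abs_of_pos hc]
        rw [div_le_div_iff_of_pos_right hc]
        exact Real.cosh_le_cosh.2 (by rw [abs_of_pos hp.1.1, abs_of_pos hR]; exact hp.1.2)
    have hint2 : IntegrableOn (fun p : ℝ × ℝ => (2 * π * Real.sinh R)⁻¹ *
        (if ¬(innerSide u p.1 p.2 ↔ innerSide v p.1 p.2) then Real.cosh p.1 else 0))
        ((Set.Ioc (0:ℝ) R) ×ˢ (Set.Ico (0:ℝ) (2*π))) :=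
      (integrableOn_sep u v hR).const_mul _
    rw [MeasureTheory.integral_sub hint1 hint2, htotal,
      MeasureTheory.integral_const_mul, hsep]
    field_simp
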